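/- Let G = (V,E) be a finite graph, s, a, b ∈ V, with the p-biased random orientation. Assume the set-version correlation inequality P(S → a and S → b) ≥ P(S → a)·P(S → b) holds for all nonempty S ⊆ V' and all vertices a, b of every graph on fewer vertices than G. Then using the decomposition over the random out-boundary O_S of S and the four-functions theorem, P(S → a and S → b) ≥ P(S → a)·P(S → b) holds in G for every nonempty S ⊆ V. -/

import Mathlib

open Classical Finset

noncomputable section

variable {V : Type*} [Fintype V] [LinearOrder V]

/-- An orientation of the edges of `G`: `true` on edge `e = {u,v}` (with `u < v`)
means the edge is oriented from `u` to `v` (min to max). -/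
def Orient (G : SimpleGraph V) : Type _ := ↥G.edgeFinset → Bool

instance (G : SimpleGraph V) : Fintype (Orient G) := by unfold Orient; infer_instance

/-- The edge `{u,v}` exists and is oriented from `u` to `v` in `ω`. -/
def step (G : SimpleGraph V) (ω : Orient G) (u v : V) : Prop :=
  ∃ h : G.Adj u v,
    ω ⟨s(u, v), SimpleGraph.mem_edgeFinset.mpr ((SimpleGraph.mem_edgeSet G).mpr h)⟩ = decide (u < v)

/-- There is a directed path from `x` to `y` in the orientation `ω`. -/
def reaches (G : SimpleGraph V) (ω : Orient G) (x y : V) : Prop :=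
  Relation.ReflTransGen (step G ω) x y

/-- The probability of the orientation `ω` under independent `p`-biased coin flips. -/
def wt (G : SimpleGraph V) (p : Sym2 V → ℝ) (ω : Orient G) : ℝ :=
  ∏ e : G.edgeFinset, if ω e then p e else 1 - p e

/-- Probability of an event under the `p`-biased random orientation measure. -/
def Pr (G : SimpleGraph V) (p : Sym2 V → ℝ) (A : Set (Orient G)) : ℝ :=
  ∑ ω : Orient G, A.indicator (wt G p) ω

namespace IndStep

section Basics

variable {ι : Type*} [Fintype ι]

lemma sum_prod_bool (c d : ι → ℝ) :
    ∑ g : ι → Bool, ∏ i, (if g i then c i else d i) = ∏ i, (c i + d i) := by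
  have h := Finset.prod_univ_sum (fun _ : ι => (Finset.univ : Finset Bool))
    (fun i j => if j then c i else d i)
  simp only [Fintype.piFinset_univ] at h
  rw [← h]
  exact Finset.prod_congr rfl fun i _ => by simp

lemma sum_prod_bool' (c d : ι → ℝ) (F : Fintype (ι → Bool)) :
    (@Finset.univ _ F).sum (fun g => ∏ i, (if g i then c i else d i)) = ∏ i, (c i + d i) := by
  rw [Subsingleton.elim F Pi.instFintype]
  exact sum_prod_bool c d

variable (G : SimpleGraph V) (p : Sym2 V → ℝ)

lemma wt_nonneg (hp : ∀ e ∈ G.edgeSet, 0 ≤ p e ∧ p e ≤ 1) (ω : Orient G) : 0 ≤ wt G p ω := by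
  refine Finset.prod_nonneg fun e _ => ?_
  have he := SimpleGraph.mem_edgeFinset.mp e.2
  rcases hp e he with ⟨h0, h1⟩
  split <;> linarith

lemma sum_wt (hp : ∀ e ∈ G.edgeSet, 0 ≤ p e ∧ p e ≤ 1) :
    ∑ ω : Orient G, wt G p ω = 1 := by
  refine Eq.trans (sum_prod_bool' (fun e : ↥G.edgeFinset => p ↑e) (fun e => 1 - p ↑e) _) ?_
  exact Finset.prod_eq_one fun e _ => by ring

lemma Pr_nonneg (hp : ∀ e ∈ G.edgeSet, 0 ≤ p e ∧ p e ≤ 1) (A : Set (Orient G)) :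
    0 ≤ Pr G p A :=
  Finset.sum_nonneg fun ω _ => Set.indicator_nonneg (fun x _ => wt_nonneg G p hp x) ω

lemma Pr_mono (hp : ∀ e ∈ G.edgeSet, 0 ≤ p e ∧ p e ≤ 1) {A B : Set (Orient G)} (h : A ⊆ B) :
    Pr G p A ≤ Pr G p B :=
  Finset.sum_le_sum fun ω _ =>
    Set.indicator_le_indicator_of_subset h (fun x => wt_nonneg G p hp x) ω

lemma Pr_univ (hp : ∀ e ∈ G.edgeSet, 0 ≤ p e ∧ p e ≤ 1) :
    Pr G p Set.univ = 1 := by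
  rw [Pr]
  simp only [Set.indicator_univ]
  exact sum_wt G p hp

lemma Pr_empty : Pr G p ∅ = 0 := by simp [Pr]

end Basics

section Setup

variable (G : SimpleGraph V) (S : Finset V)

abbrev Wsub : Type _ := {v : V // v ∉ S}

def HG : SimpleGraph (Wsub S) := SimpleGraph.comap Subtype.val G

def qmap (p : Sym2 V → ℝ) : Sym2 (Wsub S) → ℝ := fun e => p (Sym2.map Subtype.val e)

lemma qmap_bounds (p : Sym2 V → ℝ) (hp : ∀ e ∈ G.edgeSet, 0 ≤ p e ∧ p e ≤ 1) :
    ∀ e ∈ (HG G S).edgeSet, 0 ≤ qmap S p e ∧ qmap S p e ≤ 1 := by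
  intro e he
  induction e using Sym2.ind with
  | _ x y =>
    refine hp _ ?_
    rw [SimpleGraph.mem_edgeSet] at he
    simpa [HG] using he

lemma edge_mem_map {e : Sym2 (Wsub S)} (he : e ∈ (HG G S).edgeFinset) :
    Sym2.map (Subtype.val) e ∈ G.edgeFinset := by
  revert he
  induction e using Sym2.ind with
  | _ x y =>
    intro he
    rw [SimpleGraph.mem_edgeFinset] at he ⊢
    rw [SimpleGraph.mem_edgeSet] at he
    simpa [HG] using he

def emb (e : ↥(HG G S).edgeFinset) : ↥G.edgeFinset :=
  ⟨Sym2.map Subtype.val e.1, edge_mem_map G S e.2⟩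

def inH (e : ↥G.edgeFinset) : Prop := ∀ v ∈ (e : Sym2 V), v ∉ S

lemma inH_emb (e : ↥(HG G S).edgeFinset) : inH G S (emb G S e) := by
  intro v hv
  obtain ⟨w, -, rfl⟩ := Sym2.mem_map.mp hv
  exact w.2

def eHfun (e : ↥(HG G S).edgeFinset) : {e : ↥G.edgeFinset // inH G S e} :=
  ⟨emb G S e, inH_emb G S e⟩

lemma eHfun_bij : Function.Bijective (eHfun G S) := by
  constructor
  · intro e₁ e₂ h
    apply Subtype.ext
    have h2 : Sym2.map Subtype.val e₁.1 = Sym2.map Subtype.val e₂.1 :=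
      congrArg (fun x => (x.1 : Sym2 V)) h
    exact Sym2.map.injective Subtype.val_injective h2
  · rintro ⟨⟨e, he⟩, hin⟩
    revert he hin
    induction e using Sym2.ind with
    | _ u v =>
      intro he hin
      have hu : u ∉ S := hin u (Sym2.mem_mk_left u v)
      have hv : v ∉ S := hin v (Sym2.mem_mk_right u v)
      have hadj : G.Adj u v := by
        rw [SimpleGraph.mem_edgeFinset, SimpleGraph.mem_edgeSet] at he
        exact he
      have hadj' : (HG G S).Adj ⟨u, hu⟩ ⟨v, hv⟩ := hadj
      refine ⟨⟨s(⟨u, hu⟩, ⟨v, hv⟩),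
        SimpleGraph.mem_edgeFinset.mpr ((SimpleGraph.mem_edgeSet _).mpr hadj')⟩, ?_⟩
      apply Subtype.ext
      apply Subtype.ext
      simp [eHfun, emb]

def eH : ↥(HG G S).edgeFinset ≃ {e : ↥G.edgeFinset // inH G S e} :=
  Equiv.ofBijective _ (eHfun_bij G S)

def Psi (σ : {e : ↥G.edgeFinset // ¬ inH G S e} → Bool) (t : Orient (HG G S)) : Orient G :=
  fun e => if h : inH G S e then t ((eH G S).symm ⟨e, h⟩) else σ ⟨e, h⟩

def tauMap (ω : Orient G) : Orient (HG G S) := fun e => ω (emb G S e)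

lemma emb_eH_symm (x : {e : ↥G.edgeFinset // inH G S e}) :
    emb G S ((eH G S).symm x) = x.1 :=
  congrArg Subtype.val ((eH G S).apply_symm_apply x)

lemma tauMap_Psi (σ : {e : ↥G.edgeFinset // ¬ inH G S e} → Bool) (t : Orient (HG G S)) :
    tauMap G S (Psi G S σ t) = t := by
  funext e
  have h : inH G S (emb G S e) := inH_emb G S e
  show Psi G S σ t (emb G S e) = t e
  rw [Psi, dif_pos h]
  exact congrArg t ((eH G S).symm_apply_apply e)

lemma Psi_fst (σ : {e : ↥G.edgeFinset // ¬ inH G S e} → Bool) (t : Orient (HG G S))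
    (e1 : {e : ↥G.edgeFinset // ¬ inH G S e}) : Psi G S σ t e1.1 = σ e1 := by
  rw [Psi, dif_neg e1.2]

def PsiE : ({e : ↥G.edgeFinset // ¬ inH G S e} → Bool) × Orient (HG G S) ≃ Orient G where
  toFun st := Psi G S st.1 st.2
  invFun ω := (fun e1 => ω e1.1, tauMap G S ω)
  left_inv := by
    rintro ⟨σ, t⟩
    refine Prod.ext ?_ (tauMap_Psi G S σ t)
    funext e1
    exact Psi_fst G S σ t e1
  right_inv := by
    intro ω
    funext e
    show Psi G S (fun e1 => ω e1.1) (tauMap G S ω) e = ω e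
    unfold Psi
    by_cases h : inH G S e
    · rw [dif_pos h]
      exact congrArg ω (emb_eH_symm G S ⟨e, h⟩)
    · rw [dif_neg h]

variable {G S}

lemma step_up {ω : Orient G} {x y : Wsub S}
    (h : step (HG G S) (tauMap G S ω) x y) : step G ω ↑x ↑y := by
  obtain ⟨hadj, hval⟩ := h
  have hadj' : G.Adj ↑x ↑y := hadj
  refine ⟨hadj', ?_⟩
  calc ω ⟨s((x : V), (y : V)), _⟩
      = ω (emb G S ⟨s(x, y), SimpleGraph.mem_edgeFinset.mpr
          ((SimpleGraph.mem_edgeSet _).mpr hadj)⟩) := by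
        exact (congrArg ω (Subtype.ext (by simp [emb]))).symm
    _ = decide (x < y) := hval
    _ = decide ((x : V) < (y : V)) := decide_eq_decide.mpr Subtype.coe_lt_coe.symm

lemma step_down {ω : Orient G} {u c : V} (hu : u ∉ S) (hc : c ∉ S) (h : step G ω u c) :
    step (HG G S) (tauMap G S ω) ⟨u, hu⟩ ⟨c, hc⟩ := by
  obtain ⟨hadj, hval⟩ := h
  have hadj' : (HG G S).Adj ⟨u, hu⟩ ⟨c, hc⟩ := hadj
  refine ⟨hadj', ?_⟩
  calc tauMap G S ω ⟨s((⟨u, hu⟩ : Wsub S), (⟨c, hc⟩ : Wsub S)), _⟩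
      = ω ⟨s(u, c), SimpleGraph.mem_edgeFinset.mpr
          ((SimpleGraph.mem_edgeSet _).mpr hadj)⟩ := by
        exact congrArg ω (Subtype.ext (by simp [emb]))
    _ = decide (u < c) := hval
    _ = decide ((⟨u, hu⟩ : Wsub S) < (⟨c, hc⟩ : Wsub S)) :=
        decide_eq_decide.mpr Subtype.mk_lt_mk.symm

lemma reaches_up {ω : Orient G} {x y : Wsub S}
    (h : reaches (HG G S) (tauMap G S ω) x y) : reaches G ω ↑x ↑y := by
  induction h with
  | refl => exact Relation.ReflTransGen.refl
  | tail _ hstep ih => exact ih.tail (step_up hstep)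

variable (G S)

def outSet (ω : Orient G) : Finset (Wsub S) :=
  univ.filter (fun v => ∃ u ∈ S, step G ω u ↑v)

lemma mem_outSet {ω : Orient G} {v : Wsub S} :
    v ∈ outSet G S ω ↔ ∃ u ∈ S, step G ω u ↑v := by simp [outSet]

lemma reach_iff (ω : Orient G) {a : V} (ha : a ∉ S) :
    (∃ x ∈ S, reaches G ω x a) ↔
      ∃ x ∈ outSet G S ω, reaches (HG G S) (tauMap G S ω) x ⟨a, ha⟩ := by
  constructor
  · rintro ⟨x, hx, hr⟩
    have key : ∀ u, reaches G ω u a →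
        (∃ x ∈ outSet G S ω, reaches (HG G S) (tauMap G S ω) x ⟨a, ha⟩) ∨
        (∃ h : u ∉ S, reaches (HG G S) (tauMap G S ω) ⟨u, h⟩ ⟨a, ha⟩) := by
      intro u hu
      induction hu using Relation.ReflTransGen.head_induction_on with
      | refl => exact Or.inr ⟨ha, Relation.ReflTransGen.refl⟩
      | @head u c hstep htail ih =>
        rcases ih with h | ⟨hc, hr'⟩
        · exact Or.inl h
        · by_cases hus : u ∈ S
          · exact Or.inl ⟨⟨c, hc⟩, (mem_outSet G S).mpr ⟨u, hus, hstep⟩, hr'⟩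
          · exact Or.inr ⟨hus, Relation.ReflTransGen.head (step_down hus hc hstep) hr'⟩
    rcases key x hr with h | ⟨hxn, -⟩
    · exact h
    · exact absurd hx hxn
  · rintro ⟨x, hx, hr⟩
    obtain ⟨u, hu, hstep⟩ := (mem_outSet G S).mp hx
    exact ⟨u, hu, Relation.ReflTransGen.head hstep (reaches_up hr)⟩

end Setup

section Mu

variable (G : SimpleGraph V) (S : Finset V)

abbrev E1 := {e : ↥G.edgeFinset // ¬ inH G S e}

def Xfun (σ : E1 G S → Bool) : Finset (Wsub S) := outSet G S (Psi G S σ (fun _ => true))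

lemma Psi_S_edge (σ : E1 G S → Bool) (t : Orient (HG G S)) {u w : V} (hu : u ∈ S)
    (m : s(u, w) ∈ G.edgeFinset) :
    Psi G S σ t ⟨s(u, w), m⟩ =
      σ ⟨⟨s(u, w), m⟩, fun hall => (hall u (Sym2.mem_mk_left u w)) hu⟩ := by
  rw [Psi, dif_neg]

lemma outSet_Psi (σ : E1 G S → Bool) (t : Orient (HG G S)) :
    outSet G S (Psi G S σ t) = Xfun G S σ := by
  ext v
  rw [Xfun, mem_outSet, mem_outSet]
  constructor <;> rintro ⟨u, hu, h, hval⟩ <;> refine ⟨u, hu, h, ?_⟩ <;>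
    simp only [Psi_S_edge G S σ t hu, Psi_S_edge G S σ (fun _ => true) hu] at hval ⊢ <;>
    exact hval

lemma mem_Xfun {σ : E1 G S → Bool} {v : Wsub S} :
    v ∈ Xfun G S σ ↔ ∃ u, ∃ hu : u ∈ S, ∃ h : G.Adj u ↑v,
      σ ⟨⟨s(u, ↑v), SimpleGraph.mem_edgeFinset.mpr ((SimpleGraph.mem_edgeSet G).mpr h)⟩,
        fun hall => (hall u (Sym2.mem_mk_left u ↑v)) hu⟩ = decide (u < (v : V)) := by
  rw [Xfun, mem_outSet]
  constructor
  · rintro ⟨u, hu, h, hval⟩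
    refine ⟨u, hu, h, ?_⟩
    rw [Psi_S_edge G S σ (fun _ => true) hu] at hval
    exact hval
  · rintro ⟨u, hu, h, hval⟩
    refine ⟨u, hu, h, ?_⟩
    rw [Psi_S_edge G S σ (fun _ => true) hu]
    exact hval

def Pcond (X Y : Finset (Wsub S)) (e1 : E1 G S) : Prop :=
  ∃ w : Wsub S, w ∈ Y \ X ∧ (w : V) ∈ (e1.1 : Sym2 V)

def swap1 (X Y : Finset (Wsub S)) (σ σ' : E1 G S → Bool) : E1 G S → Bool :=
  fun e => if Pcond G S X Y e then σ' e else σ e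

def swap2 (X Y : Finset (Wsub S)) (σ σ' : E1 G S → Bool) : E1 G S → Bool :=
  fun e => if Pcond G S X Y e then σ e else σ' e

lemma Pcond_edge {X Y : Finset (Wsub S)} {u : V} {v : Wsub S} (hu : u ∈ S)
    (m : s(u, ↑v) ∈ G.edgeFinset) (hn : ¬ inH G S ⟨s(u, ↑v), m⟩) :
    Pcond G S X Y ⟨⟨s(u, ↑v), m⟩, hn⟩ ↔ v ∈ Y \ X := by
  constructor
  · rintro ⟨w, hw, hmem⟩
    rcases Sym2.mem_iff.mp hmem with h | h
    · exact absurd hu (h ▸ w.2)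
    · exact (Subtype.ext h : w = v) ▸ hw
  · intro hv
    exact ⟨v, hv, Sym2.mem_mk_right _ _⟩

lemma mem_Xfun_swap1 {X Y : Finset (Wsub S)} {σ σ' : E1 G S → Bool} {v : Wsub S} :
    v ∈ Xfun G S (swap1 G S X Y σ σ') ↔
      (if v ∈ Y \ X then v ∈ Xfun G S σ' else v ∈ Xfun G S σ) := by
  by_cases hv : v ∈ Y \ X
  · rw [if_pos hv, mem_Xfun, mem_Xfun]
    constructor <;> rintro ⟨u, hu, h, hval⟩ <;> refine ⟨u, hu, h, ?_⟩ <;>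
      [skip; skip] <;>
      simp only [swap1, if_pos ((Pcond_edge G S hu _ _).mpr hv)] at hval ⊢ <;> exact hval
  · rw [if_neg hv, mem_Xfun, mem_Xfun]
    constructor <;> rintro ⟨u, hu, h, hval⟩ <;> refine ⟨u, hu, h, ?_⟩ <;>
      simp only [swap1, if_neg (fun hp => hv ((Pcond_edge G S hu _ _).mp hp))] at hval ⊢ <;>
      exact hval

lemma mem_Xfun_swap2 {X Y : Finset (Wsub S)} {σ σ' : E1 G S → Bool} {v : Wsub S} :
    v ∈ Xfun G S (swap2 G S X Y σ σ') ↔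
      (if v ∈ Y \ X then v ∈ Xfun G S σ else v ∈ Xfun G S σ') := by
  by_cases hv : v ∈ Y \ X
  · rw [if_pos hv, mem_Xfun, mem_Xfun]
    constructor <;> rintro ⟨u, hu, h, hval⟩ <;> refine ⟨u, hu, h, ?_⟩ <;>
      simp only [swap2, if_pos ((Pcond_edge G S hu _ _).mpr hv)] at hval ⊢ <;> exact hval
  · rw [if_neg hv, mem_Xfun, mem_Xfun]
    constructor <;> rintro ⟨u, hu, h, hval⟩ <;> refine ⟨u, hu, h, ?_⟩ <;>
      simp only [swap2, if_neg (fun hp => hv ((Pcond_edge G S hu _ _).mp hp))] at hval ⊢ <;>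
      exact hval

lemma Xfun_swap1 {X Y : Finset (Wsub S)} {σ σ' : E1 G S → Bool}
    (hσ : Xfun G S σ = X) (hσ' : Xfun G S σ' = Y) :
    Xfun G S (swap1 G S X Y σ σ') = X ∪ Y := by
  ext v
  rw [mem_Xfun_swap1 G S, hσ, hσ', Finset.mem_union]
  by_cases hv : v ∈ Y \ X <;>
    [rw [if_pos hv]; rw [if_neg hv]] <;> rw [Finset.mem_sdiff] at hv <;> tauto

lemma Xfun_swap2 {X Y : Finset (Wsub S)} {σ σ' : E1 G S → Bool}
    (hσ : Xfun G S σ = X) (hσ' : Xfun G S σ' = Y) :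
    Xfun G S (swap2 G S X Y σ σ') = X ∩ Y := by
  ext v
  rw [mem_Xfun_swap2 G S, hσ, hσ', Finset.mem_inter]
  by_cases hv : v ∈ Y \ X <;>
    [rw [if_pos hv]; rw [if_neg hv]] <;> rw [Finset.mem_sdiff] at hv <;> tauto

lemma Xfun_swap1' {X Y : Finset (Wsub S)} {ρ ρ' : E1 G S → Bool}
    (hρ : Xfun G S ρ = X ∪ Y) (hρ' : Xfun G S ρ' = X ∩ Y) :
    Xfun G S (swap1 G S X Y ρ ρ') = X := by
  ext v
  rw [mem_Xfun_swap1 G S, hρ, hρ']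
  by_cases hv : v ∈ Y \ X <;>
    [rw [if_pos hv]; rw [if_neg hv]] <;>
    rw [Finset.mem_sdiff] at hv <;>
    simp only [Finset.mem_union, Finset.mem_inter] <;> tauto

lemma Xfun_swap2' {X Y : Finset (Wsub S)} {ρ ρ' : E1 G S → Bool}
    (hρ : Xfun G S ρ = X ∪ Y) (hρ' : Xfun G S ρ' = X ∩ Y) :
    Xfun G S (swap2 G S X Y ρ ρ') = Y := by
  ext v
  rw [mem_Xfun_swap2 G S, hρ, hρ']
  by_cases hv : v ∈ Y \ X <;>
    [rw [if_pos hv]; rw [if_neg hv]] <;>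
    rw [Finset.mem_sdiff] at hv <;>
    simp only [Finset.mem_union, Finset.mem_inter] <;> tauto

lemma swap_invol1 (X Y : Finset (Wsub S)) (σ σ' : E1 G S → Bool) :
    swap1 G S X Y (swap1 G S X Y σ σ') (swap2 G S X Y σ σ') = σ := by
  funext e
  by_cases h : Pcond G S X Y e <;> simp [swap1, swap2, h]

lemma swap_invol2 (X Y : Finset (Wsub S)) (σ σ' : E1 G S → Bool) :
    swap2 G S X Y (swap1 G S X Y σ σ') (swap2 G S X Y σ σ') = σ' := by
  funext e
  by_cases h : Pcond G S X Y e <;> simp [swap1, swap2, h]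

def wt1 (p : Sym2 V → ℝ) (σ : E1 G S → Bool) : ℝ :=
  ∏ e : E1 G S, if σ e then p (e.1 : Sym2 V) else 1 - p (e.1 : Sym2 V)

lemma wt1_nonneg (p : Sym2 V → ℝ) (hp : ∀ e ∈ G.edgeSet, 0 ≤ p e ∧ p e ≤ 1)
    (σ : E1 G S → Bool) : 0 ≤ wt1 G S p σ := by
  refine Finset.prod_nonneg fun e _ => ?_
  rcases hp _ (SimpleGraph.mem_edgeFinset.mp e.1.2) with ⟨h0, h1⟩
  split <;> linarith

lemma sum_wt1 (p : Sym2 V → ℝ) (hp : ∀ e ∈ G.edgeSet, 0 ≤ p e ∧ p e ≤ 1) :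
    ∑ σ : E1 G S → Bool, wt1 G S p σ = 1 := by
  refine Eq.trans (sum_prod_bool' (fun e : E1 G S => p (e.1 : Sym2 V))
    (fun e => 1 - p (e.1 : Sym2 V)) _) ?_
  exact Finset.prod_eq_one fun e _ => by ring

lemma wt1_swap (p : Sym2 V → ℝ) (X Y : Finset (Wsub S)) (σ σ' : E1 G S → Bool) :
    wt1 G S p (swap1 G S X Y σ σ') * wt1 G S p (swap2 G S X Y σ σ') =
      wt1 G S p σ * wt1 G S p σ' := by
  rw [wt1, wt1, wt1, wt1, ← Finset.prod_mul_distrib, ← Finset.prod_mul_distrib]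
  refine Finset.prod_congr rfl fun e _ => ?_
  by_cases h : Pcond G S X Y e
  · simp only [swap1, swap2, if_pos h]
    ring
  · simp only [swap1, swap2, if_neg h]

def mu (p : Sym2 V → ℝ) (X : Finset (Wsub S)) : ℝ :=
  ∑ σ ∈ univ.filter (fun σ => Xfun G S σ = X), wt1 G S p σ

lemma mu_nonneg (p : Sym2 V → ℝ) (hp : ∀ e ∈ G.edgeSet, 0 ≤ p e ∧ p e ≤ 1)
    (X : Finset (Wsub S)) : 0 ≤ mu G S p X :=
  Finset.sum_nonneg fun σ _ => wt1_nonneg G S p hp σ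

lemma sum_mu (p : Sym2 V → ℝ) (hp : ∀ e ∈ G.edgeSet, 0 ≤ p e ∧ p e ≤ 1) :
    ∑ X : Finset (Wsub S), mu G S p X = 1 := by
  unfold mu
  rw [Finset.sum_fiberwise_eq_sum_filter univ univ (Xfun G S) (wt1 G S p)]
  rw [show (univ.filter fun σ => Xfun G S σ ∈ univ) = univ from by simp]
  exact sum_wt1 G S p hp

lemma mu_logmod (p : Sym2 V → ℝ) (X Y : Finset (Wsub S)) :
    mu G S p X * mu G S p Y = mu G S p (X ∪ Y) * mu G S p (X ∩ Y) := by
  rw [mu, mu, mu, mu, Finset.sum_mul_sum, Finset.sum_mul_sum,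
    ← Finset.sum_product', ← Finset.sum_product']
  refine Finset.sum_nbij' (fun st => (swap1 G S X Y st.1 st.2, swap2 G S X Y st.1 st.2))
    (fun st => (swap1 G S X Y st.1 st.2, swap2 G S X Y st.1 st.2)) ?_ ?_ ?_ ?_ ?_
  · rintro ⟨σ, σ'⟩ hst
    rw [Finset.mem_product] at hst ⊢
    obtain ⟨h1, h2⟩ := hst
    rw [Finset.mem_filter] at h1 h2 ⊢
    exact ⟨⟨Finset.mem_univ _, Xfun_swap1 G S h1.2 h2.2⟩, by
      rw [Finset.mem_filter]
      exact ⟨Finset.mem_univ _, Xfun_swap2 G S h1.2 h2.2⟩⟩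
  · rintro ⟨ρ, ρ'⟩ hst
    rw [Finset.mem_product] at hst ⊢
    obtain ⟨h1, h2⟩ := hst
    rw [Finset.mem_filter] at h1 h2 ⊢
    exact ⟨⟨Finset.mem_univ _, Xfun_swap1' G S h1.2 h2.2⟩, by
      rw [Finset.mem_filter]
      exact ⟨Finset.mem_univ _, Xfun_swap2' G S h1.2 h2.2⟩⟩
  · rintro ⟨σ, σ'⟩ _
    exact Prod.ext (swap_invol1 G S X Y σ σ') (swap_invol2 G S X Y σ σ')
  · rintro ⟨ρ, ρ'⟩ _
    exact Prod.ext (swap_invol1 G S X Y ρ ρ') (swap_invol2 G S X Y ρ ρ')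
  · rintro ⟨σ, σ'⟩ _
    exact (wt1_swap G S p X Y σ σ').symm

lemma Psi_emb (σ : E1 G S → Bool) (t : Orient (HG G S)) (e' : ↥(HG G S).edgeFinset) :
    Psi G S σ t (emb G S e') = t e' :=
  congrFun (tauMap_Psi G S σ t) e'

lemma wt_Psi (p : Sym2 V → ℝ) (σ : E1 G S → Bool) (t : Orient (HG G S)) :
    wt G p (Psi G S σ t) = wt1 G S p σ * wt (HG G S) (qmap S p) t := by
  rw [wt, wt1,
    ← Fintype.prod_subtype_mul_prod_subtype (inH G S)
      (fun e : ↥G.edgeFinset => if Psi G S σ t e then p e else 1 - p e), mul_comm]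
  congr 1
  · refine Finset.prod_congr rfl fun e1 _ => ?_
    rw [Psi_fst G S σ t e1]
  · rw [wt, ← Equiv.prod_comp (eH G S)
      (fun x : {e : ↥G.edgeFinset // inH G S e} =>
        if Psi G S σ t x.1 then p x.1 else 1 - p x.1)]
    refine Finset.prod_congr rfl fun e' _ => ?_
    show (if Psi G S σ t (emb G S e') then p (emb G S e').1 else 1 - p (emb G S e').1)
      = if t e' then qmap S p e'.1 else 1 - qmap S p e'.1
    rw [Psi_emb G S σ t e']
    rfl

lemma Pr_decomp (p : Sym2 V → ℝ) (EV : Finset (Wsub S) → Set (Orient (HG G S))) :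
    Pr G p {ω | tauMap G S ω ∈ EV (outSet G S ω)} =
      ∑ X : Finset (Wsub S), mu G S p X * Pr (HG G S) (qmap S p) (EV X) := by
  set A : Set (Orient G) := {ω | tauMap G S ω ∈ EV (outSet G S ω)} with hA
  have h1 : Pr G p A = ∑ st : (E1 G S → Bool) × Orient (HG G S),
      A.indicator (wt G p) (PsiE G S st) :=
    (Fintype.sum_equiv (PsiE G S) _ _ (fun st => rfl)).symm
  rw [h1, Fintype.sum_prod_type]
  have h2 : ∀ (σ : E1 G S → Bool) (t : Orient (HG G S)),
      A.indicator (wt G p) (PsiE G S (σ, t)) =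
        wt1 G S p σ * (EV (Xfun G S σ)).indicator (wt (HG G S) (qmap S p)) t := by
    intro σ t
    have hmem : PsiE G S (σ, t) ∈ A ↔ t ∈ EV (Xfun G S σ) := by
      show tauMap G S (Psi G S σ t) ∈ EV (outSet G S (Psi G S σ t)) ↔ _
      rw [tauMap_Psi, outSet_Psi]
    by_cases hm : t ∈ EV (Xfun G S σ)
    · rw [Set.indicator_of_mem (hmem.mpr hm), Set.indicator_of_mem hm]
      exact wt_Psi G S p σ t
    · rw [Set.indicator_of_notMem (fun hc => hm (hmem.mp hc)),
        Set.indicator_of_notMem hm, mul_zero]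
  have h3 : ∀ σ : E1 G S → Bool,
      (∑ t : Orient (HG G S), A.indicator (wt G p) (PsiE G S (σ, t))) =
        wt1 G S p σ * Pr (HG G S) (qmap S p) (EV (Xfun G S σ)) := by
    intro σ
    rw [Pr, Finset.mul_sum]
    exact Finset.sum_congr rfl fun t _ => h2 σ t
  rw [Finset.sum_congr rfl fun σ _ => h3 σ]
  rw [show (univ : Finset (E1 G S → Bool))
      = univ.filter (fun σ => Xfun G S σ ∈ (univ : Finset (Finset (Wsub S)))) from by simp]
  rw [← Finset.sum_fiberwise_eq_sum_filter univ univ (Xfun G S)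
    (fun σ => wt1 G S p σ * Pr (HG G S) (qmap S p) (EV (Xfun G S σ)))]
  refine Finset.sum_congr rfl fun X _ => ?_
  rw [mu, Finset.sum_mul]
  refine Finset.sum_congr rfl fun σ hσ => ?_
  rw [(Finset.mem_filter.mp hσ).2]

end Mu

end IndStep


set_option maxHeartbeats 2000000 in
/-- The inductive step: if the set-version correlation inequality holds for all
graphs on fewer vertices, then it holds for `G`. -/
theorem inductive_step {V : Type} [Fintype V] [LinearOrder V]
    (G : SimpleGraph V) (p : Sym2 V → ℝ)
    (hp : ∀ e ∈ G.edgeSet, 0 ≤ p e ∧ p e ≤ 1)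
    (s a b : V)
    (IH : ∀ (W : Type) (_ : Fintype W) (_ : LinearOrder W),
      Fintype.card W < Fintype.card V →
      ∀ (H : SimpleGraph W) (q : Sym2 W → ℝ),
        (∀ e ∈ H.edgeSet, 0 ≤ q e ∧ q e ≤ 1) →
        ∀ (S' : Finset W), S'.Nonempty → ∀ a' b' : W,
          Pr H q {ω | (∃ x ∈ S', reaches H ω x a') ∧ (∃ x ∈ S', reaches H ω x b')} ≥
            Pr H q {ω | ∃ x ∈ S', reaches H ω x a'} *
              Pr H q {ω | ∃ x ∈ S', reaches H ω x b'}) :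
    ∀ (S : Finset V), S.Nonempty →
      Pr G p {ω | (∃ x ∈ S, reaches G ω x a) ∧ (∃ x ∈ S, reaches G ω x b)} ≥
        Pr G p {ω | ∃ x ∈ S, reaches G ω x a} *
          Pr G p {ω | ∃ x ∈ S, reaches G ω x b} := by
  intro S hS
  by_cases haS : a ∈ S
  · have hA : {ω : Orient G | ∃ x ∈ S, reaches G ω x a} = Set.univ := by
      ext ω
      simp only [Set.mem_setOf_eq, Set.mem_univ, iff_true]
      exact ⟨a, haS, Relation.ReflTransGen.refl⟩
    have hAB : {ω : Orient G | (∃ x ∈ S, reaches G ω x a) ∧ (∃ x ∈ S, reaches G ω x b)}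
        = {ω | ∃ x ∈ S, reaches G ω x b} := by
      ext ω
      simp only [Set.mem_setOf_eq, and_iff_right_iff_imp]
      exact fun _ => ⟨a, haS, Relation.ReflTransGen.refl⟩
    rw [hAB, hA, IndStep.Pr_univ G p hp, one_mul]
  by_cases hbS : b ∈ S
  · have hB : {ω : Orient G | ∃ x ∈ S, reaches G ω x b} = Set.univ := by
      ext ω
      simp only [Set.mem_setOf_eq, Set.mem_univ, iff_true]
      exact ⟨b, hbS, Relation.ReflTransGen.refl⟩
    have hAB : {ω : Orient G | (∃ x ∈ S, reaches G ω x a) ∧ (∃ x ∈ S, reaches G ω x b)}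
        = {ω | ∃ x ∈ S, reaches G ω x a} := by
      ext ω
      simp only [Set.mem_setOf_eq, and_iff_left_iff_imp]
      exact fun _ => ⟨b, hbS, Relation.ReflTransGen.refl⟩
    rw [hAB, hB, IndStep.Pr_univ G p hp, mul_one]
  -- main case : a ∉ S, b ∉ S
  obtain ⟨s0, hs0⟩ := hS
  have hcard : Fintype.card (IndStep.Wsub S) < Fintype.card V :=
    Fintype.card_subtype_lt (p := fun v => v ∉ S) (x := s0) (not_not.mpr hs0)
  have hq := IndStep.qmap_bounds G S p hp
  set W := IndStep.Wsub S
  set H := IndStep.HG G S with hH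
  set q := IndStep.qmap S p with hq'
  set a' : W := ⟨a, haS⟩
  set b' : W := ⟨b, hbS⟩
  set fA : Finset W → ℝ := fun X => Pr H q {t | ∃ x ∈ X, reaches H t x a'} with hfA
  set fB : Finset W → ℝ := fun X => Pr H q {t | ∃ x ∈ X, reaches H t x b'} with hfB
  set fAB : Finset W → ℝ := fun X =>
    Pr H q {t | (∃ x ∈ X, reaches H t x a') ∧ (∃ x ∈ X, reaches H t x b')} with hfAB
  set μ : Finset W → ℝ := IndStep.mu G S p with hμ
  have dA : Pr G p {ω | ∃ x ∈ S, reaches G ω x a} = ∑ X : Finset W, μ X * fA X := by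
    rw [show {ω : Orient G | ∃ x ∈ S, reaches G ω x a}
        = {ω | IndStep.tauMap G S ω ∈
            (fun X => {t | ∃ x ∈ X, reaches H t x a'}) (IndStep.outSet G S ω)} from
      Set.ext fun ω => IndStep.reach_iff G S ω haS]
    exact IndStep.Pr_decomp G S p (fun X => {t | ∃ x ∈ X, reaches H t x a'})
  have dB : Pr G p {ω | ∃ x ∈ S, reaches G ω x b} = ∑ X : Finset W, μ X * fB X := by
    rw [show {ω : Orient G | ∃ x ∈ S, reaches G ω x b}
        = {ω | IndStep.tauMap G S ω ∈
            (fun X => {t | ∃ x ∈ X, reaches H t x b'}) (IndStep.outSet G S ω)} from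
      Set.ext fun ω => IndStep.reach_iff G S ω hbS]
    exact IndStep.Pr_decomp G S p (fun X => {t | ∃ x ∈ X, reaches H t x b'})
  have dAB : Pr G p {ω | (∃ x ∈ S, reaches G ω x a) ∧ (∃ x ∈ S, reaches G ω x b)}
      = ∑ X : Finset W, μ X * fAB X := by
    rw [show {ω : Orient G | (∃ x ∈ S, reaches G ω x a) ∧ (∃ x ∈ S, reaches G ω x b)}
        = {ω | IndStep.tauMap G S ω ∈
            (fun X => {t | (∃ x ∈ X, reaches H t x a') ∧ (∃ x ∈ X, reaches H t x b')})
              (IndStep.outSet G S ω)} from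
      Set.ext fun ω => and_congr (IndStep.reach_iff G S ω haS) (IndStep.reach_iff G S ω hbS)]
    exact IndStep.Pr_decomp G S p
      (fun X => {t | (∃ x ∈ X, reaches H t x a') ∧ (∃ x ∈ X, reaches H t x b')})
  have hμ0 : ∀ X, 0 ≤ μ X := IndStep.mu_nonneg G S p hp
  have hfA0 : ∀ X, 0 ≤ fA X := fun X => IndStep.Pr_nonneg H q hq _
  have hfB0 : ∀ X, 0 ≤ fB X := fun X => IndStep.Pr_nonneg H q hq _
  have key : ∀ X : Finset W, μ X * (fA X * fB X) ≤ μ X * fAB X := by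
    intro X
    refine mul_le_mul_of_nonneg_left ?_ (hμ0 X)
    rcases eq_or_ne X ∅ with rfl | hNe
    · have h0 : fA ∅ = 0 := by
        show Pr H q {t | ∃ x ∈ (∅ : Finset W), reaches H t x a'} = 0
        rw [show {t | ∃ x ∈ (∅ : Finset W), reaches H t x a'} = (∅ : Set (Orient H)) from
          by simp]
        exact IndStep.Pr_empty H q
      rw [h0, zero_mul]
      exact IndStep.Pr_nonneg H q hq _
    · exact IH W inferInstance inferInstance hcard H q hq X
        (Finset.nonempty_iff_ne_empty.mpr hNe) a' b'
  have hfkg : (∑ X : Finset W, μ X * fA X) * (∑ X : Finset W, μ X * fB X) ≤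
      (∑ X : Finset W, μ X) * ∑ X : Finset W, μ X * (fA X * fB X) := by
    refine fkg fA fB μ (Pi.le_def.mpr fun X => hμ0 X) (Pi.le_def.mpr fun X => hfA0 X) (Pi.le_def.mpr fun X => hfB0 X) ?_ ?_ ?_
    · intro X Y hXY
      refine IndStep.Pr_mono H q hq ?_
      rintro t ⟨x, hx, hr⟩
      exact ⟨x, hXY hx, hr⟩
    · intro X Y hXY
      refine IndStep.Pr_mono H q hq ?_
      rintro t ⟨x, hx, hr⟩
      exact ⟨x, hXY hx, hr⟩
    · intro X Y
      refine le_of_eq ?_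
      rw [Finset.sup_eq_union, Finset.inf_eq_inter]
      rw [hμ]
      rw [IndStep.mu_logmod G S p X Y]
      ring
  rw [IndStep.sum_mu G S p hp, one_mul] at hfkg
  calc Pr G p {ω | ∃ x ∈ S, reaches G ω x a} * Pr G p {ω | ∃ x ∈ S, reaches G ω x b}
      = (∑ X : Finset W, μ X * fA X) * (∑ X : Finset W, μ X * fB X) := by rw [dA, dB]
    _ ≤ ∑ X : Finset W, μ X * (fA X * fB X) := hfkg
    _ ≤ ∑ X : Finset W, μ X * fAB X := Finset.sum_le_sum fun X _ => key X
    _ = Pr G p {ω | (∃ x ∈ S, reaches G ω x a) ∧ (∃ x ∈ S, reaches G ω x b)} := dAB.symm
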